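/- Let r : ℝ → ℝ be twice continuously differentiable with 0 < r(t) < 1 for all t ∈ ℝ, let F(s,t) = (√(1 − r(t)²) cos s, √(1 − r(t)²) sin s, r(t) cos t, r(t) sin t) ∈ ℝ⁴, and let ν(s,t) = [ r(t)²√(1 − r(t)²)·(cos s, sin s, 0, 0) − r(t)(1 − r(t)²)·(0, 0, cos t, sin t) − r'(t)·(0, 0, sin t, −cos t) ] / √(r'(t)² + r(t)²(1 − r(t)²)). Then for all (s,t) ∈ ℝ²: ⟨∂ν/∂s, ∂F/∂s⟩ = r(t)²(1 − r(t)²)/√(r'(t)² + r(t)²(1 − r(t)²)) and ⟨∂ν/∂t, ∂F/∂t⟩ = [ r(t)(1 − r(t)²) r''(t) − (2 − 3 r(t)²) r'(t)² − r(t)²(1 − r(t)²)² ] / [ (1 − r(t)²) √(r'(t)² + r(t)²(1 − r(t)²)) ], where ∂/∂s and ∂/∂t denote the derivatives of the maps s ↦ F(s,t), s ↦ ν(s,t) and t ↦ F(s,t), t ↦ ν(s,t) respectively. -/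

import Mathlib

open scoped RealInnerProductSpace

noncomputable def e4 (a b c d : ℝ) : EuclideanSpace ℝ (Fin 4) :=
  (WithLp.equiv 2 (Fin 4 → ℝ)).symm ![a, b, c, d]

lemma e4_smul (x a b c d : ℝ) : x • e4 a b c d = e4 (x*a) (x*b) (x*c) (x*d) := by
  ext i; fin_cases i <;> simp [e4]

lemma e4_sub (a b c d a' b' c' d' : ℝ) :
    e4 a b c d - e4 a' b' c' d' = e4 (a-a') (b-b') (c-c') (d-d') := by
  ext i; fin_cases i <;> simp [e4]

lemma e4_congr {a b c d a' b' c' d' : ℝ} (h1 : a = a') (h2 : b = b') (h3 : c = c')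
    (h4 : d = d') : e4 a b c d = e4 a' b' c' d' := by rw [h1, h2, h3, h4]

lemma inner_e4 (a b c d a' b' c' d' : ℝ) :
    ⟪e4 a b c d, e4 a' b' c' d'⟫ = a*a' + b*b' + c*c' + d*d' := by
  simp [e4, PiLp.inner_apply, Fin.sum_univ_four]; ring

lemma hasDerivAt_e4 {f1 f2 f3 f4 : ℝ → ℝ} {f1' f2' f3' f4' x : ℝ}
    (h1 : HasDerivAt f1 f1' x) (h2 : HasDerivAt f2 f2' x)
    (h3 : HasDerivAt f3 f3' x) (h4 : HasDerivAt f4 f4' x) :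
    HasDerivAt (fun y => e4 (f1 y) (f2 y) (f3 y) (f4 y)) (e4 f1' f2' f3' f4') x := by
  have h : HasDerivAt (fun y => (![f1 y, f2 y, f3 y, f4 y] : Fin 4 → ℝ))
      ![f1', f2', f3', f4'] x := by
    rw [hasDerivAt_pi]
    intro i; fin_cases i <;> simpa
  have := ((PiLp.continuousLinearEquiv 2 ℝ (fun _ : Fin 4 => ℝ)).symm :
      (Fin 4 → ℝ) →L[ℝ] EuclideanSpace ℝ (Fin 4)).hasFDerivAt.comp_hasDerivAt x h
  exact this

lemma scalar_s (R cs ss sq sd : ℝ) (hcs : ss^2 + cs^2 = 1) (hsq2 : sq^2 = 1 - R^2) :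
    (sd⁻¹*(R^2*sq)*(-ss))*(sq*(-ss)) + (sd⁻¹*(R^2*sq)*cs)*(sq*cs) + 0*0 + 0*0
      = R^2*(1 - R^2)/sd := by
  rw [div_eq_mul_inv]
  linear_combination (sd⁻¹*R^2*sq^2)*hcs + (sd⁻¹*R^2)*hsq2

lemma scalar_t (R R1 R2 E cs ss ct st sq sd : ℝ)
    (hcs : ss^2 + cs^2 = 1) (hct : st^2 + ct^2 = 1)
    (hsq2 : sq^2 = 1 - R^2) (hsq0 : sq ≠ 0) (hsd0 : sd ≠ 0) (hQ : (1:ℝ) - R^2 ≠ 0) :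
    (-(E/(2*sd))/sd^2*(R^2*sq) + sd⁻¹*(2*R*R1*sq + R^2*(-(R*R1)/sq)))*cs * ((-(R*R1)/sq)*cs)
  + (-(E/(2*sd))/sd^2*(R^2*sq) + sd⁻¹*(2*R*R1*sq + R^2*(-(R*R1)/sq)))*ss * ((-(R*R1)/sq)*ss)
  + (-(-(E/(2*sd))/sd^2*(R*(1-R^2)*ct + R1*st)
      + sd⁻¹*((1-3*R^2)*R1*ct + R*(1-R^2)*(-st) + (R2*st + R1*ct)))) * (R1*ct + R*(-st))
  + (-(E/(2*sd))/sd^2*(R1*ct - R*(1-R^2)*st)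
      + sd⁻¹*((R2*ct + R1*(-st)) - ((1-3*R^2)*R1*st + R*(1-R^2)*ct))) * (R1*st + R*ct)
  = (R*(1-R^2)*R2 - (2-3*R^2)*R1^2 - R^2*(1-R^2)^2) / ((1-R^2)*sd) := by
  set M : ℝ := -(E/(2*sd))/sd^2*(R^2*sq) + sd⁻¹*(2*R*R1*sq + R^2*(-(R*R1)/sq)) with hM
  have step1 :
      (-(E/(2*sd))/sd^2*(R^2*sq) + sd⁻¹*(2*R*R1*sq + R^2*(-(R*R1)/sq)))*cs * ((-(R*R1)/sq)*cs)
    + (-(E/(2*sd))/sd^2*(R^2*sq) + sd⁻¹*(2*R*R1*sq + R^2*(-(R*R1)/sq)))*ss * ((-(R*R1)/sq)*ss)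
    + (-(-(E/(2*sd))/sd^2*(R*(1-R^2)*ct + R1*st)
        + sd⁻¹*((1-3*R^2)*R1*ct + R*(1-R^2)*(-st) + (R2*st + R1*ct)))) * (R1*ct + R*(-st))
    + (-(E/(2*sd))/sd^2*(R1*ct - R*(1-R^2)*st)
        + sd⁻¹*((R2*ct + R1*(-st)) - ((1-3*R^2)*R1*st + R*(1-R^2)*ct))) * (R1*st + R*ct)
    = M * (-(R*R1)/sq)
      + (-(E/(2*sd))/sd^2*(R - R*(1-R^2))*R1
        + sd⁻¹*(R*(R2 - R*(1-R^2)) - (2-3*R^2)*R1^2)) := by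
    rw [hM]
    linear_combination
      ((-(E/(2*sd))/sd^2*(R^2*sq) + sd⁻¹*(2*R*R1*sq + R^2*(-(R*R1)/sq)))*(-(R*R1)/sq)) * hcs
      + (-(E/(2*sd))/sd^2*(R - R*(1-R^2))*R1
          + sd⁻¹*(R*(R2 - R*(1-R^2)) - (2-3*R^2)*R1^2)) * hct
  rw [step1]
  have key : M * (-(R*R1)/sq)
      = -(E/(2*sd))/sd^2*(-(R^3*R1)) + sd⁻¹*(R^4*R1^2/(1-R^2) - 2*R^2*R1^2) := by
    rw [hM, ← hsq2]
    field_simp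
    ring
  rw [key]
  field_simp
  ring

/-- The diagonal components of the second fundamental form of the rotationally
symmetric immersion `F` with unit normal `ν`. -/
theorem second_fundamental_form_of_rotational_immersion
    (r : ℝ → ℝ) (hr : ContDiff ℝ 2 r) (hr01 : ∀ t : ℝ, 0 < r t ∧ r t < 1)
    (F ν : ℝ → ℝ → EuclideanSpace ℝ (Fin 4))
    (hF : ∀ s t : ℝ, F s t = (WithLp.equiv 2 (Fin 4 → ℝ)).symm
      ![Real.sqrt (1 - r t ^ 2) * Real.cos s,
        Real.sqrt (1 - r t ^ 2) * Real.sin s,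
        r t * Real.cos t,
        r t * Real.sin t])
    (hν : ∀ s t : ℝ, ν s t =
      (Real.sqrt ((deriv r t) ^ 2 + r t ^ 2 * (1 - r t ^ 2)))⁻¹ •
        ((r t ^ 2 * Real.sqrt (1 - r t ^ 2)) •
            (WithLp.equiv 2 (Fin 4 → ℝ)).symm ![Real.cos s, Real.sin s, 0, 0]
          - (r t * (1 - r t ^ 2)) •
            (WithLp.equiv 2 (Fin 4 → ℝ)).symm ![0, 0, Real.cos t, Real.sin t]
          - deriv r t •
            (WithLp.equiv 2 (Fin 4 → ℝ)).symm ![0, 0, Real.sin t, -Real.cos t])) :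
    ∀ s t : ℝ,
      ⟪deriv (fun s' => ν s' t) s, deriv (fun s' => F s' t) s⟫
        = r t ^ 2 * (1 - r t ^ 2)
          / Real.sqrt ((deriv r t) ^ 2 + r t ^ 2 * (1 - r t ^ 2)) ∧
      ⟪deriv (fun t' => ν s t') t, deriv (fun t' => F s t') t⟫
        = (r t * (1 - r t ^ 2) * deriv (deriv r) t
            - (2 - 3 * r t ^ 2) * (deriv r t) ^ 2
            - r t ^ 2 * (1 - r t ^ 2) ^ 2)
          / ((1 - r t ^ 2)
            * Real.sqrt ((deriv r t) ^ 2 + r t ^ 2 * (1 - r t ^ 2))) := by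
  intro s t
  obtain ⟨hr0, hr1⟩ := hr01 t
  have hq : 0 < 1 - r t ^ 2 := by nlinarith
  have hd : 0 < (deriv r t) ^ 2 + r t ^ 2 * (1 - r t ^ 2) := by positivity
  constructor
  · -- s-derivative part
    set R : ℝ := r t with hR
    set R1 : ℝ := deriv r t with hR1
    set sq : ℝ := Real.sqrt (1 - R ^ 2) with hsq
    set sd : ℝ := Real.sqrt (R1 ^ 2 + R ^ 2 * (1 - R ^ 2)) with hsd
    have hsq2 : sq ^ 2 = 1 - R ^ 2 := Real.sq_sqrt hq.le
    have hνs : (fun s' => ν s' t) = fun s' =>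
        e4 (sd⁻¹*(R^2*sq)*Real.cos s') (sd⁻¹*(R^2*sq)*Real.sin s')
           (sd⁻¹*(-(R*(1-R^2))*Real.cos t - R1*Real.sin t))
           (sd⁻¹*(-(R*(1-R^2))*Real.sin t - R1*(-Real.cos t))) := by
      funext s'
      rw [hν s' t]
      rw [show (WithLp.equiv 2 (Fin 4 → ℝ)).symm ![Real.cos s', Real.sin s', 0, 0]
            = e4 (Real.cos s') (Real.sin s') 0 0 from rfl,
          show (WithLp.equiv 2 (Fin 4 → ℝ)).symm ![0, 0, Real.cos t, Real.sin t]
            = e4 0 0 (Real.cos t) (Real.sin t) from rfl,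
          show (WithLp.equiv 2 (Fin 4 → ℝ)).symm ![0, 0, Real.sin t, -Real.cos t]
            = e4 0 0 (Real.sin t) (-Real.cos t) from rfl]
      rw [e4_smul, e4_smul, e4_smul, e4_sub, e4_sub, e4_smul]
      exact e4_congr (by ring) (by ring) (by ring) (by ring)
    have hFs : (fun s' => F s' t) = fun s' =>
        e4 (sq*Real.cos s') (sq*Real.sin s') (R*Real.cos t) (R*Real.sin t) := by
      funext s'
      rw [hF s' t]; rfl
    have h1 : HasDerivAt (fun s' => sd⁻¹*(R^2*sq)*Real.cos s')
        (sd⁻¹*(R^2*sq)*(-Real.sin s)) s := (Real.hasDerivAt_cos s).const_mul _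
    have h2 : HasDerivAt (fun s' => sd⁻¹*(R^2*sq)*Real.sin s')
        (sd⁻¹*(R^2*sq)*Real.cos s) s := (Real.hasDerivAt_sin s).const_mul _
    have h3 : HasDerivAt (fun _ : ℝ => sd⁻¹*(-(R*(1-R^2))*Real.cos t - R1*Real.sin t))
        0 s := hasDerivAt_const _ _
    have h4 : HasDerivAt (fun _ : ℝ => sd⁻¹*(-(R*(1-R^2))*Real.sin t - R1*(-Real.cos t)))
        0 s := hasDerivAt_const _ _
    have g1 : HasDerivAt (fun s' => sq*Real.cos s') (sq*(-Real.sin s)) s :=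
      (Real.hasDerivAt_cos s).const_mul _
    have g2 : HasDerivAt (fun s' => sq*Real.sin s') (sq*Real.cos s) s :=
      (Real.hasDerivAt_sin s).const_mul _
    have g3 : HasDerivAt (fun _ : ℝ => R*Real.cos t) 0 s := hasDerivAt_const _ _
    have g4 : HasDerivAt (fun _ : ℝ => R*Real.sin t) 0 s := hasDerivAt_const _ _
    have hdν : deriv (fun s' => ν s' t) s
        = e4 (sd⁻¹*(R^2*sq)*(-Real.sin s)) (sd⁻¹*(R^2*sq)*Real.cos s) 0 0 := by
      rw [hνs]; exact (hasDerivAt_e4 h1 h2 h3 h4).deriv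
    have hdF : deriv (fun s' => F s' t) s
        = e4 (sq*(-Real.sin s)) (sq*Real.cos s) 0 0 := by
      rw [hFs]; exact (hasDerivAt_e4 g1 g2 g3 g4).deriv
    rw [hdν, hdF, inner_e4]
    exact scalar_s R (Real.cos s) (Real.sin s) sq sd (Real.sin_sq_add_cos_sq s) hsq2
  · -- t-derivative part
    have hdr : Differentiable ℝ r := hr.differentiable (by norm_num)
    have hcd1 : ContDiff ℝ 1 (deriv r) := by
      have h2 : ContDiff ℝ ((1 : WithTop ℕ∞)+1) r := by
        rw [show ((1 : WithTop ℕ∞)+1) = 2 by norm_num]; exact hr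
      exact (contDiff_succ_iff_deriv.mp h2).2.2
    have hdr2 : Differentiable ℝ (deriv r) := hcd1.differentiable (by norm_num)
    have hRd : HasDerivAt r (deriv r t) t := (hdr t).hasDerivAt
    have hRd2 : HasDerivAt (deriv r) (deriv (deriv r) t) t := (hdr2 t).hasDerivAt
    have hq0 : (1:ℝ) - r t^2 ≠ 0 := hq.ne'
    have hsq0 : Real.sqrt (1 - r t^2) ≠ 0 := by positivity
    have hsd0 : Real.sqrt ((deriv r t)^2 + r t^2*(1 - r t^2)) ≠ 0 := by positivity
    have hsq2 : Real.sqrt (1 - r t^2)^2 = 1 - r t^2 := Real.sq_sqrt hq.le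
    have hq' : HasDerivAt (fun t' => 1 - r t'^2) (-(2*r t*deriv r t)) t := by
      have h := (hRd.fun_pow 2).const_sub 1
      exact h.congr_deriv (by push_cast; ring)
    have hg : HasDerivAt (fun t' => Real.sqrt (1 - r t'^2))
        (-(r t*deriv r t)/Real.sqrt (1 - r t^2)) t := by
      have h := hq'.sqrt hq0
      convert h using 1
      rw [div_eq_div_iff hsq0 (by positivity)]; ring
    have hP : HasDerivAt (fun t' => r t'*(1 - r t'^2)) ((1-3*r t^2)*deriv r t) t := by
      have h := hRd.mul hq'
      exact h.congr_deriv (by ring)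
    have hB : HasDerivAt (fun t' => r t'^2*Real.sqrt (1 - r t'^2))
        (2*r t*deriv r t*Real.sqrt (1 - r t^2)
          + r t^2*(-(r t*deriv r t)/Real.sqrt (1 - r t^2))) t := by
      have h := (hRd.fun_pow 2).mul hg
      exact h.congr_deriv (by push_cast; ring)
    have hD : HasDerivAt (fun t' => (deriv r t')^2 + r t'^2*(1 - r t'^2))
        (2*deriv r t*deriv (deriv r) t + (2-4*r t^2)*r t*deriv r t) t := by
      have h := (hRd2.fun_pow 2).add ((hRd.fun_pow 2).mul hq')
      exact h.congr_deriv (by push_cast; ring)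
    have hsd' : HasDerivAt (fun t' => Real.sqrt ((deriv r t')^2 + r t'^2*(1 - r t'^2)))
        ((2*deriv r t*deriv (deriv r) t + (2-4*r t^2)*r t*deriv r t)
          / (2*Real.sqrt ((deriv r t)^2 + r t^2*(1 - r t^2)))) t := hD.sqrt hd.ne'
    have hC : HasDerivAt (fun t' => (Real.sqrt ((deriv r t')^2 + r t'^2*(1 - r t'^2)))⁻¹)
        (-((2*deriv r t*deriv (deriv r) t + (2-4*r t^2)*r t*deriv r t)
            /(2*Real.sqrt ((deriv r t)^2 + r t^2*(1 - r t^2))))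
          / Real.sqrt ((deriv r t)^2 + r t^2*(1 - r t^2))^2) t := hsd'.inv hsd0
    have hn1 : HasDerivAt (fun t' =>
        (Real.sqrt ((deriv r t')^2 + r t'^2*(1 - r t'^2)))⁻¹
          * (r t'^2*Real.sqrt (1 - r t'^2)) * Real.cos s)
        ((-((2*deriv r t*deriv (deriv r) t + (2-4*r t^2)*r t*deriv r t)
            /(2*Real.sqrt ((deriv r t)^2 + r t^2*(1 - r t^2))))
              / Real.sqrt ((deriv r t)^2 + r t^2*(1 - r t^2))^2
                * (r t^2*Real.sqrt (1 - r t^2))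
          + (Real.sqrt ((deriv r t)^2 + r t^2*(1 - r t^2)))⁻¹
              * (2*r t*deriv r t*Real.sqrt (1 - r t^2)
                + r t^2*(-(r t*deriv r t)/Real.sqrt (1 - r t^2))))
          * Real.cos s) t := (hC.mul hB).mul_const _
    have hn2 : HasDerivAt (fun t' =>
        (Real.sqrt ((deriv r t')^2 + r t'^2*(1 - r t'^2)))⁻¹
          * (r t'^2*Real.sqrt (1 - r t'^2)) * Real.sin s)
        ((-((2*deriv r t*deriv (deriv r) t + (2-4*r t^2)*r t*deriv r t)
            /(2*Real.sqrt ((deriv r t)^2 + r t^2*(1 - r t^2))))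
              / Real.sqrt ((deriv r t)^2 + r t^2*(1 - r t^2))^2
                * (r t^2*Real.sqrt (1 - r t^2))
          + (Real.sqrt ((deriv r t)^2 + r t^2*(1 - r t^2)))⁻¹
              * (2*r t*deriv r t*Real.sqrt (1 - r t^2)
                + r t^2*(-(r t*deriv r t)/Real.sqrt (1 - r t^2))))
          * Real.sin s) t := (hC.mul hB).mul_const _
    have hin3 : HasDerivAt (fun t' => r t'*(1 - r t'^2)*Real.cos t' + deriv r t'*Real.sin t')
        ((1-3*r t^2)*deriv r t*Real.cos t + r t*(1 - r t^2)*(-Real.sin t)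
          + (deriv (deriv r) t*Real.sin t + deriv r t*Real.cos t)) t :=
      (hP.mul (Real.hasDerivAt_cos t)).add (hRd2.mul (Real.hasDerivAt_sin t))
    have hn3 : HasDerivAt (fun t' =>
        -((Real.sqrt ((deriv r t')^2 + r t'^2*(1 - r t'^2)))⁻¹
          * (r t'*(1 - r t'^2)*Real.cos t' + deriv r t'*Real.sin t')))
        (-(-((2*deriv r t*deriv (deriv r) t + (2-4*r t^2)*r t*deriv r t)
            /(2*Real.sqrt ((deriv r t)^2 + r t^2*(1 - r t^2))))
              / Real.sqrt ((deriv r t)^2 + r t^2*(1 - r t^2))^2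
                * (r t*(1 - r t^2)*Real.cos t + deriv r t*Real.sin t)
          + (Real.sqrt ((deriv r t)^2 + r t^2*(1 - r t^2)))⁻¹
              * ((1-3*r t^2)*deriv r t*Real.cos t + r t*(1 - r t^2)*(-Real.sin t)
                + (deriv (deriv r) t*Real.sin t + deriv r t*Real.cos t)))) t :=
      (hC.mul hin3).neg
    have hin4 : HasDerivAt (fun t' => deriv r t'*Real.cos t' - r t'*(1 - r t'^2)*Real.sin t')
        ((deriv (deriv r) t*Real.cos t + deriv r t*(-Real.sin t))
          - ((1-3*r t^2)*deriv r t*Real.sin t + r t*(1 - r t^2)*Real.cos t)) t :=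
      (hRd2.mul (Real.hasDerivAt_cos t)).sub (hP.mul (Real.hasDerivAt_sin t))
    have hn4 : HasDerivAt (fun t' =>
        (Real.sqrt ((deriv r t')^2 + r t'^2*(1 - r t'^2)))⁻¹
          * (deriv r t'*Real.cos t' - r t'*(1 - r t'^2)*Real.sin t'))
        (-((2*deriv r t*deriv (deriv r) t + (2-4*r t^2)*r t*deriv r t)
            /(2*Real.sqrt ((deriv r t)^2 + r t^2*(1 - r t^2))))
              / Real.sqrt ((deriv r t)^2 + r t^2*(1 - r t^2))^2
                * (deriv r t*Real.cos t - r t*(1 - r t^2)*Real.sin t)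
          + (Real.sqrt ((deriv r t)^2 + r t^2*(1 - r t^2)))⁻¹
              * ((deriv (deriv r) t*Real.cos t + deriv r t*(-Real.sin t))
                - ((1-3*r t^2)*deriv r t*Real.sin t + r t*(1 - r t^2)*Real.cos t))) t :=
      hC.mul hin4
    have hf1 : HasDerivAt (fun t' => Real.sqrt (1 - r t'^2)*Real.cos s)
        ((-(r t*deriv r t)/Real.sqrt (1 - r t^2))*Real.cos s) t := hg.mul_const _
    have hf2 : HasDerivAt (fun t' => Real.sqrt (1 - r t'^2)*Real.sin s)
        ((-(r t*deriv r t)/Real.sqrt (1 - r t^2))*Real.sin s) t := hg.mul_const _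
    have hf3 : HasDerivAt (fun t' => r t'*Real.cos t')
        (deriv r t*Real.cos t + r t*(-Real.sin t)) t := hRd.mul (Real.hasDerivAt_cos t)
    have hf4 : HasDerivAt (fun t' => r t'*Real.sin t')
        (deriv r t*Real.sin t + r t*Real.cos t) t := hRd.mul (Real.hasDerivAt_sin t)
    have hνt : (fun t' => ν s t') = fun t' =>
        e4 ((Real.sqrt ((deriv r t')^2 + r t'^2*(1 - r t'^2)))⁻¹
              * (r t'^2*Real.sqrt (1 - r t'^2)) * Real.cos s)
           ((Real.sqrt ((deriv r t')^2 + r t'^2*(1 - r t'^2)))⁻¹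
              * (r t'^2*Real.sqrt (1 - r t'^2)) * Real.sin s)
           (-((Real.sqrt ((deriv r t')^2 + r t'^2*(1 - r t'^2)))⁻¹
              * (r t'*(1 - r t'^2)*Real.cos t' + deriv r t'*Real.sin t')))
           ((Real.sqrt ((deriv r t')^2 + r t'^2*(1 - r t'^2)))⁻¹
              * (deriv r t'*Real.cos t' - r t'*(1 - r t'^2)*Real.sin t')) := by
      funext t'
      rw [hν s t']
      rw [show (WithLp.equiv 2 (Fin 4 → ℝ)).symm ![Real.cos s, Real.sin s, 0, 0]
            = e4 (Real.cos s) (Real.sin s) 0 0 from rfl,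
          show (WithLp.equiv 2 (Fin 4 → ℝ)).symm ![0, 0, Real.cos t', Real.sin t']
            = e4 0 0 (Real.cos t') (Real.sin t') from rfl,
          show (WithLp.equiv 2 (Fin 4 → ℝ)).symm ![0, 0, Real.sin t', -Real.cos t']
            = e4 0 0 (Real.sin t') (-Real.cos t') from rfl]
      rw [e4_smul, e4_smul, e4_smul, e4_sub, e4_sub, e4_smul]
      exact e4_congr (by ring) (by ring) (by ring) (by ring)
    have hFt : (fun t' => F s t') = fun t' =>
        e4 (Real.sqrt (1 - r t'^2)*Real.cos s) (Real.sqrt (1 - r t'^2)*Real.sin s)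
           (r t'*Real.cos t') (r t'*Real.sin t') := by
      funext t'
      rw [hF s t']; rfl
    have hdν : deriv (fun t' => ν s t') t =
        e4 ((-((2*deriv r t*deriv (deriv r) t + (2-4*r t^2)*r t*deriv r t)
            /(2*Real.sqrt ((deriv r t)^2 + r t^2*(1 - r t^2))))
              / Real.sqrt ((deriv r t)^2 + r t^2*(1 - r t^2))^2
                * (r t^2*Real.sqrt (1 - r t^2))
          + (Real.sqrt ((deriv r t)^2 + r t^2*(1 - r t^2)))⁻¹
              * (2*r t*deriv r t*Real.sqrt (1 - r t^2)
                + r t^2*(-(r t*deriv r t)/Real.sqrt (1 - r t^2))))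
          * Real.cos s)
        ((-((2*deriv r t*deriv (deriv r) t + (2-4*r t^2)*r t*deriv r t)
            /(2*Real.sqrt ((deriv r t)^2 + r t^2*(1 - r t^2))))
              / Real.sqrt ((deriv r t)^2 + r t^2*(1 - r t^2))^2
                * (r t^2*Real.sqrt (1 - r t^2))
          + (Real.sqrt ((deriv r t)^2 + r t^2*(1 - r t^2)))⁻¹
              * (2*r t*deriv r t*Real.sqrt (1 - r t^2)
                + r t^2*(-(r t*deriv r t)/Real.sqrt (1 - r t^2))))
          * Real.sin s)
        (-(-((2*deriv r t*deriv (deriv r) t + (2-4*r t^2)*r t*deriv r t)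
            /(2*Real.sqrt ((deriv r t)^2 + r t^2*(1 - r t^2))))
              / Real.sqrt ((deriv r t)^2 + r t^2*(1 - r t^2))^2
                * (r t*(1 - r t^2)*Real.cos t + deriv r t*Real.sin t)
          + (Real.sqrt ((deriv r t)^2 + r t^2*(1 - r t^2)))⁻¹
              * ((1-3*r t^2)*deriv r t*Real.cos t + r t*(1 - r t^2)*(-Real.sin t)
                + (deriv (deriv r) t*Real.sin t + deriv r t*Real.cos t))))
        (-((2*deriv r t*deriv (deriv r) t + (2-4*r t^2)*r t*deriv r t)
            /(2*Real.sqrt ((deriv r t)^2 + r t^2*(1 - r t^2))))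
              / Real.sqrt ((deriv r t)^2 + r t^2*(1 - r t^2))^2
                * (deriv r t*Real.cos t - r t*(1 - r t^2)*Real.sin t)
          + (Real.sqrt ((deriv r t)^2 + r t^2*(1 - r t^2)))⁻¹
              * ((deriv (deriv r) t*Real.cos t + deriv r t*(-Real.sin t))
                - ((1-3*r t^2)*deriv r t*Real.sin t + r t*(1 - r t^2)*Real.cos t))) := by
      rw [hνt]; exact (hasDerivAt_e4 hn1 hn2 hn3 hn4).deriv
    have hdF : deriv (fun t' => F s t') t =
        e4 ((-(r t*deriv r t)/Real.sqrt (1 - r t^2))*Real.cos s)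
           ((-(r t*deriv r t)/Real.sqrt (1 - r t^2))*Real.sin s)
           (deriv r t*Real.cos t + r t*(-Real.sin t))
           (deriv r t*Real.sin t + r t*Real.cos t) := by
      rw [hFt]; exact (hasDerivAt_e4 hf1 hf2 hf3 hf4).deriv
    rw [hdν, hdF, inner_e4]
    exact scalar_t (r t) (deriv r t) (deriv (deriv r) t)
      (2*deriv r t*deriv (deriv r) t + (2-4*r t^2)*r t*deriv r t)
      (Real.cos s) (Real.sin s) (Real.cos t) (Real.sin t)
      (Real.sqrt (1 - r t^2)) (Real.sqrt ((deriv r t)^2 + r t^2*(1 - r t^2)))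
      (Real.sin_sq_add_cos_sq s) (Real.sin_sq_add_cos_sq t) hsq2 hsq0 hsd0 hq0
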